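/- arXiv:1703.04806 — 2 statements merged into one kernel-verified Lean document; each statement's English description precedes it below -/
import Mathlib

section
/- Let T = (S,Σ,κ,AP,L) be a labelled STS and M = (Q,q₀,E,𝓕) a deterministic Muller automaton over AP, and let T ⋉ M be the product STS on S × Q. If A ∈ Σ is an attractor for T, then A × Q is an attractor for T ⋉ M: for every initial probability measure ν on S × Q, Prob^{T⋉M}_ν(F (A × Q)) = 1. -/
open MeasureTheory ProbabilityTheory ENNReal Filter Topology

namespace STS

variable {S : Type*} [MeasurableSpace S]

/-- Probability of the cylinder `Cyl(A 0, …, A n)` for the Markov chain with kernel `κ`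
and initial distribution `μ`. -/
noncomputable def cylProb (κ : Kernel S S) : ℕ → Measure S → (ℕ → Set S) → ℝ≥0∞
  | 0, μ, A => μ (A 0)
  | n + 1, μ, A => ∫⁻ s in A 0, cylProb κ n (κ s) (fun i => A (i + 1)) ∂μ

/-- `P` assigns to each initial (probability) distribution the path measure (on `ℕ → S`,
with the product σ-algebra) of the time-homogeneous Markov chain with transition kernel `κ`,
as given by the Ionescu–Tulcea construction: it is the unique probability measure giving
cylinders their prescribed probabilities. -/
def IsPathMeasure (κ : Kernel S S) (P : Measure S → Measure (ℕ → S)) : Prop :=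
  ∀ μ : Measure S, IsProbabilityMeasure μ →
    IsProbabilityMeasure (P μ) ∧
    ∀ (n : ℕ) (A : ℕ → Set S), (∀ i, MeasurableSet (A i)) →
      P μ {ρ | ∀ i ≤ n, ρ i ∈ A i} = cylProb κ n μ A

/-- The path event `F B`: eventually reach `B`. -/
def evF (B : Set S) : Set (ℕ → S) := {ρ | ∃ k, ρ k ∈ B}

/-- The path event `F≤n B`. -/
def evFle (n : ℕ) (B : Set S) : Set (ℕ → S) := {ρ | ∃ k ≤ n, ρ k ∈ B}

/-- The path event `F≥p B`. -/
def evFge (p : ℕ) (B : Set S) : Set (ℕ → S) := {ρ | ∃ k, p ≤ k ∧ ρ k ∈ B}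

/-- The path event `GF B`: visit `B` infinitely often. -/
def evGF (B : Set S) : Set (ℕ → S) := {ρ | ∀ n, ∃ k, n ≤ k ∧ ρ k ∈ B}

/-- The path event `FG B`: eventually stay in `B` forever. -/
def evFG (B : Set S) : Set (ℕ → S) := {ρ | ∃ n, ∀ k, n ≤ k → ρ k ∈ B}

/-- The until event `B' U B`. -/
def evU (B' B : Set S) : Set (ℕ → S) := {ρ | ∃ k, ρ k ∈ B ∧ ∀ j < k, ρ j ∈ B'}

/-- The bounded until event `B' U≤n B`. -/
def evUle (n : ℕ) (B' B : Set S) : Set (ℕ → S) := {ρ | ∃ k ≤ n, ρ k ∈ B ∧ ∀ j < k, ρ j ∈ B'}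

/-- The avoid-set `B̃` of `B`: states from which `B` is reached with probability `0`. -/
def avoid (P : Measure S → Measure (ℕ → S)) (B : Set S) : Set S :=
  {s | P (Measure.dirac s) (evF B) = 0}

/-- `T` is decisive w.r.t. `B` from `μ`. -/
def Decisive (P : Measure S → Measure (ℕ → S)) (μ : Measure S) (B : Set S) : Prop :=
  P μ (evF B ∪ evF (avoid P B)) = 1

/-- `T` is strongly decisive w.r.t. `B` from `μ`. -/
def StronglyDecisive (P : Measure S → Measure (ℕ → S)) (μ : Measure S) (B : Set S) : Prop :=
  P μ (evGF B ∪ evF (avoid P B)) = 1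

/-- `T` is persistently decisive w.r.t. `B` from `μ`. -/
def PersistentlyDecisive (P : Measure S → Measure (ℕ → S)) (μ : Measure S) (B : Set S) : Prop :=
  ∀ p : ℕ, P μ (evFge p B ∪ evFge p (avoid P B)) = 1

/-- `PreProb(B)`: measurable sets `B'` from which `B` is reached in one step with positive
probability, whatever the initial distribution concentrated on `B'`. -/
def PreProb (P : Measure S → Measure (ℕ → S)) (B : Set S) : Set (Set S) :=
  {B' | MeasurableSet B' ∧ ∀ μ' : Measure S, IsProbabilityMeasure μ' → μ' B' = 1 →
    0 < P μ' {ρ | ρ 0 ∈ B' ∧ ρ 1 ∈ B}}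

/-- `T` is fair w.r.t. `B` from `μ`. -/
def Fair (P : Measure S → Measure (ℕ → S)) (μ : Measure S) (B : Set S) : Prop :=
  ∀ B' ∈ PreProb P B, 0 < P μ (evGF B') →
    P μ (evGF B ∩ evGF B') = P μ (evGF B')

/-- The one-step measure transformer `Ω_T`. -/
noncomputable def Omega (κ : Kernel S S) (μ : Measure S) : Measure S :=
  μ.bind (fun s => κ s)

/-- Two measures are qualitatively equivalent if they have the same null (measurable) sets. -/
def QualEquiv {T : Type*} [MeasurableSpace T] (μ ν : Measure T) : Prop :=
  ∀ A : Set T, MeasurableSet A → (μ A = 0 ↔ ν A = 0)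

/-- `T₂ = (S₂,κ₂)` is an `α`-abstraction of `T₁ = (S₁,κ₁)`. -/
def IsAbstraction {S₁ S₂ : Type*} [MeasurableSpace S₁] [MeasurableSpace S₂]
    (κ₁ : Kernel S₁ S₁) (κ₂ : Kernel S₂ S₂) (α : S₁ → S₂) : Prop :=
  ∀ μ : Measure S₁, IsProbabilityMeasure μ →
    QualEquiv (Measure.map α (Omega κ₁ μ)) (Omega κ₂ (Measure.map α μ))


lemma measurable_cylProb (κ : Kernel S S) [IsSFiniteKernel κ] (n : ℕ) (A : ℕ → Set S)
    (hA : ∀ i, MeasurableSet (A i)) :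
    Measurable fun s => cylProb κ n (κ s) A := by
  induction n generalizing A with
  | zero => exact κ.measurable_coe (hA 0)
  | succ n ih =>
      simp only [cylProb]
      exact Measurable.setLIntegral_kernel (ih _ (fun i => hA (i + 1))) (hA 0)

section Prod
variable {Q : Type*} [Finite Q] [MeasurableSpace Q] [MeasurableSingletonClass Q]
variable {AP : Type*}

lemma kernel_prod_univ
    (κ : Kernel S S) (L : S → Set AP) (E : Set (Q × Set AP × Q))
    (hdet : ∀ q u q₁ q₂, (q, u, q₁) ∈ E → (q, u, q₂) ∈ E → q₁ = q₂)
    (hcomp : ∀ q u, ∃ q', (q, u, q') ∈ E)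
    (κ' : Kernel (S × Q) (S × Q))
    (hκ'mem : ∀ (s : S) (q : Q) (C : Set S), MeasurableSet C → ∀ q' : Q,
      (q, L s, q') ∈ E → κ' (s, q) (C ×ˢ ({q'} : Set Q)) = κ s C)
    (hκ'nmem : ∀ (s : S) (q : Q) (C : Set S), MeasurableSet C → ∀ q' : Q,
      (q, L s, q') ∉ E → κ' (s, q) (C ×ˢ ({q'} : Set Q)) = 0)
    (s : S) (q : Q) (C : Set S) (hC : MeasurableSet C) :
    κ' (s, q) (C ×ˢ (Set.univ : Set Q)) = κ s C := by
  have : Countable Q := Countable.of_equiv _ (Equiv.refl Q)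
  obtain ⟨q'', hq''⟩ := hcomp q (L s)
  have hU : C ×ˢ (Set.univ : Set Q) = ⋃ q' : Q, C ×ˢ ({q'} : Set Q) := by
    rw [← Set.iUnion_of_singleton Q, Set.prod_iUnion]
  rw [hU, measure_iUnion ?_ ?_]
  · rw [tsum_eq_single q'']
    · exact hκ'mem s q C hC q'' hq''
    · intro b hb
      by_cases hbE : (q, L s, b) ∈ E
      · exact absurd (hdet q (L s) b q'' hbE hq'') hb
      · exact hκ'nmem s q C hC b hbE
  · intro i j hij
    simp only [Set.disjoint_left]
    rintro ⟨x, y⟩ ⟨_, hy⟩ ⟨_, hy'⟩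
    exact hij (by simp at hy hy'; rw [← hy, hy'])
  · exact fun i => hC.prod (MeasurableSet.singleton i)

lemma kernel_map_fst
    (κ : Kernel S S) (L : S → Set AP) (E : Set (Q × Set AP × Q))
    (hdet : ∀ q u q₁ q₂, (q, u, q₁) ∈ E → (q, u, q₂) ∈ E → q₁ = q₂)
    (hcomp : ∀ q u, ∃ q', (q, u, q') ∈ E)
    (κ' : Kernel (S × Q) (S × Q))
    (hκ'mem : ∀ (s : S) (q : Q) (C : Set S), MeasurableSet C → ∀ q' : Q,
      (q, L s, q') ∈ E → κ' (s, q) (C ×ˢ ({q'} : Set Q)) = κ s C)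
    (hκ'nmem : ∀ (s : S) (q : Q) (C : Set S), MeasurableSet C → ∀ q' : Q,
      (q, L s, q') ∉ E → κ' (s, q) (C ×ˢ ({q'} : Set Q)) = 0)
    (s : S) (q : Q) :
    (κ' (s, q)).map Prod.fst = κ s := by
  ext C hC
  rw [Measure.map_apply measurable_fst hC, ← Set.prod_univ]
  exact kernel_prod_univ κ L E hdet hcomp κ' hκ'mem hκ'nmem s q C hC

lemma cylProb_prod
    (κ : Kernel S S) [IsSFiniteKernel κ] (L : S → Set AP) (E : Set (Q × Set AP × Q))
    (hdet : ∀ q u q₁ q₂, (q, u, q₁) ∈ E → (q, u, q₂) ∈ E → q₁ = q₂)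
    (hcomp : ∀ q u, ∃ q', (q, u, q') ∈ E)
    (κ' : Kernel (S × Q) (S × Q))
    (hκ'mem : ∀ (s : S) (q : Q) (C : Set S), MeasurableSet C → ∀ q' : Q,
      (q, L s, q') ∈ E → κ' (s, q) (C ×ˢ ({q'} : Set Q)) = κ s C)
    (hκ'nmem : ∀ (s : S) (q : Q) (C : Set S), MeasurableSet C → ∀ q' : Q,
      (q, L s, q') ∉ E → κ' (s, q) (C ×ˢ ({q'} : Set Q)) = 0)
    (C : Set S) (hC : MeasurableSet C) :
    ∀ (n : ℕ) (ν : Measure (S × Q)),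
      cylProb κ' n ν (fun _ => C ×ˢ (Set.univ : Set Q))
        = cylProb κ n (ν.map Prod.fst) (fun _ => C) := by
  intro n
  induction n with
  | zero =>
      intro ν
      simp only [cylProb]
      rw [Measure.map_apply measurable_fst hC, Set.prod_univ]
  | succ n ih =>
      intro ν
      simp only [cylProb]
      have heq : ∀ x : S × Q, cylProb κ' n (κ' x) (fun _ => C ×ˢ (Set.univ : Set Q))
          = cylProb κ n (κ x.1) (fun _ => C) := by
        rintro ⟨s, q⟩
        rw [ih (κ' (s, q)), kernel_map_fst κ L E hdet hcomp κ' hκ'mem hκ'nmem s q]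
      simp_rw [heq]
      rw [setLIntegral_map hC (measurable_cylProb κ n _ (fun _ => hC)) measurable_fst,
        ← Set.prod_univ]

end Prod

/-- if `A` is an attractor for the labelled STS `T`, then `A × Q` is an
attractor for the product `T ⋉ M` with a deterministic Muller automaton
`M = (Q, q₀, E, 𝓕)`. -/
theorem statement_15 {S : Type*} [MeasurableSpace S]
    {AP : Type*} [Finite AP]
    {Q : Type*} [Finite Q] [MeasurableSpace Q] [MeasurableSingletonClass Q]
    -- the labelled STS `T = (S, Σ, κ, AP, L)` with path measures `P`
    (κ : Kernel S S) [IsMarkovKernel κ]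
    (P : Measure S → Measure (ℕ → S)) (hP : IsPathMeasure κ P)
    (L : S → Set AP) (hL : ∀ u : Set AP, MeasurableSet (L ⁻¹' {u}))
    -- the deterministic Muller automaton `M = (Q, q₀, E, 𝓕)`
    (q₀ : Q) (E : Set (Q × Set AP × Q)) (𝓕 : Set (Set Q))
    (hdet : ∀ q u q₁ q₂, (q, u, q₁) ∈ E → (q, u, q₂) ∈ E → q₁ = q₂)
    (hcomp : ∀ q u, ∃ q', (q, u, q') ∈ E)
    -- the product STS `T ⋉ M` on `S × Q`, with path measures `P'`
    (κ' : Kernel (S × Q) (S × Q)) [IsMarkovKernel κ']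
    (hκ'mem : ∀ (s : S) (q : Q) (C : Set S), MeasurableSet C → ∀ q' : Q,
      (q, L s, q') ∈ E → κ' (s, q) (C ×ˢ ({q'} : Set Q)) = κ s C)
    (hκ'nmem : ∀ (s : S) (q : Q) (C : Set S), MeasurableSet C → ∀ q' : Q,
      (q, L s, q') ∉ E → κ' (s, q) (C ×ˢ ({q'} : Set Q)) = 0)
    (P' : Measure (S × Q) → Measure (ℕ → S × Q)) (hP' : IsPathMeasure κ' P')
    -- `A` is an attractor for `T`
    (A : Set S) (hA : MeasurableSet A)
    (hattr : ∀ μ : Measure S, IsProbabilityMeasure μ → P μ (evF A) = 1) :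
    -- then `A × Q` is an attractor for `T ⋉ M`
    ∀ ν : Measure (S × Q), IsProbabilityMeasure ν →
      P' ν (evF (A ×ˢ (Set.univ : Set Q))) = 1 := by
  intro ν hν
  obtain ⟨hP'prob, hP'cyl⟩ := hP' ν hν
  have hμ : IsProbabilityMeasure (ν.map Prod.fst) :=
    Measure.isProbabilityMeasure_map measurable_fst.aemeasurable
  obtain ⟨hPprob, hPcyl⟩ := hP _ hμ
  -- cylinder events
  set C : ℕ → Set (ℕ → S) := fun n => {ρ | ∀ i ≤ n, ρ i ∈ Aᶜ} with hCdef
  set D : ℕ → Set (ℕ → S × Q) := fun n => {ρ | ∀ i ≤ n, ρ i ∈ Aᶜ ×ˢ (Set.univ : Set Q)}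
    with hDdef
  have hCmeas : ∀ n, MeasurableSet (C n) := by
    intro n
    have : C n = ⋂ i ∈ Set.Iic n, (fun ρ : ℕ → S => ρ i) ⁻¹' Aᶜ := by
      ext ρ; simp [hCdef, Set.mem_Iic]
    rw [this]
    exact MeasurableSet.biInter (Set.to_countable _)
      (fun i _ => (measurable_pi_apply i) hA.compl)
  have hFmeas : MeasurableSet (evF A) := by
    have : evF A = ⋃ k, (fun ρ : ℕ → S => ρ k) ⁻¹' A := by ext ρ; simp [evF]
    rw [this]
    exact MeasurableSet.iUnion (fun k => (measurable_pi_apply k) hA)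
  have hF'meas : MeasurableSet (evF (A ×ˢ (Set.univ : Set Q))) := by
    have : evF (A ×ˢ (Set.univ : Set Q))
        = ⋃ k, (fun ρ : ℕ → S × Q => ρ k) ⁻¹' (A ×ˢ (Set.univ : Set Q)) := by
      ext ρ; simp [evF]
    rw [this]
    exact MeasurableSet.iUnion
      (fun k => (measurable_pi_apply k) (hA.prod MeasurableSet.univ))
  -- equal cylinder probabilities
  have hDC : ∀ n, P' ν (D n) = P (ν.map Prod.fst) (C n) := by
    intro n
    rw [hP'cyl n _ (fun _ => (hA.compl.prod MeasurableSet.univ)),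
      hPcyl n _ (fun _ => hA.compl)]
    exact cylProb_prod κ L E hdet hcomp κ' hκ'mem hκ'nmem Aᶜ hA.compl n ν
  -- complement of evF A is the intersection of the C n
  have hInter : (evF A)ᶜ = ⋂ n, C n := by
    ext ρ
    simp only [Set.mem_compl_iff, evF, Set.mem_setOf_eq, Set.mem_iInter, hCdef]
    constructor
    · intro h n i _; exact fun hi => h ⟨i, hi⟩
    · rintro h ⟨k, hk⟩; exact h k k le_rfl hk
  -- the C n have measure tending to 0
  have hC0 : P (ν.map Prod.fst) ((evF A)ᶜ) = 0 := by
    rw [prob_compl_eq_zero_iff hFmeas]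
    exact hattr _ hμ
  have hiInf : ⨅ n, P (ν.map Prod.fst) (C n) = 0 := by
    rw [← hC0, hInter]
    refine (Directed.measure_iInter (fun n => (hCmeas n).nullMeasurableSet) ?_ ?_).symm
    · have hant : Antitone C := by
        intro m n hmn ρ hρ i hi
        exact hρ i (hi.trans hmn)
      exact hant.directed_ge
    · exact ⟨0, measure_ne_top _ _⟩
  -- conclude
  have hsub : ∀ n, (evF (A ×ˢ (Set.univ : Set Q)))ᶜ ⊆ D n := by
    intro n ρ hρ i _
    refine ⟨fun hi => hρ ⟨i, hi, Set.mem_univ _⟩, Set.mem_univ _⟩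
  have hle : P' ν ((evF (A ×ˢ (Set.univ : Set Q)))ᶜ) = 0 := by
    refine le_antisymm ?_ zero_le
    rw [← hiInf]
    refine le_iInf fun n => ?_
    rw [← hDC n]
    exact measure_mono (hsub n)
  rw [← prob_compl_eq_zero_iff hF'meas] at *
  exact hle


end STS
end

section
/- Let T = (S,Σ,κ) be an STS, μ a probability measure on S, and B ∈ Σ with avoid-set B̃ (and B̃̃ the avoid-set of B̃). Then: (i) if T is D(μ,B), then Prob_μ(F B) = 1 if and only if Prob_μ((S∖B) U B̃) = 0; (ii) if T is SD(μ,B), then Prob_μ(GF B) = 1 if and only if Prob_μ(F B̃) = 0; (iii) if T is D(μ,B̃) and PD(μ,B), then Prob_μ(GF B) > 0 if and only if Prob_μ(F B̃̃) > 0. -/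
open MeasureTheory ProbabilityTheory ENNReal Filter Topology

namespace STS

variable {S : Type*} [MeasurableSpace S]

section aux
open scoped Classical
set_option linter.unusedSectionVars false
variable {S : Type*} [MeasurableSpace S] (κ : Kernel S S) [IsMarkovKernel κ]

lemma measurable_cylProb_kernel (n : ℕ) (A : ℕ → Set S) (hA : ∀ i, MeasurableSet (A i)) :
    Measurable (fun s => cylProb κ n (κ s) A) := by
  induction n generalizing A with
  | zero => exact κ.measurable_coe (hA 0)
  | succ n ih =>
    have hg : Measurable (fun t => cylProb κ n (κ t) (fun i => A (i + 1))) :=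
      ih _ (fun i => hA (i + 1))
    have : (fun s => cylProb κ (n + 1) (κ s) A)
        = fun s => ∫⁻ t, (A 0).indicator (fun t => cylProb κ n (κ t) (fun i => A (i + 1))) t ∂κ s := by
      funext s
      rw [lintegral_indicator (hA 0)]
      rfl
    rw [this]
    exact Measurable.lintegral_kernel_prod_right
      ((hg.indicator (hA 0)).comp measurable_snd)

lemma cylProb_dirac_zero (A : ℕ → Set S) (hA : ∀ i, MeasurableSet (A i)) (s : S) :
    cylProb κ 0 (Measure.dirac s) A = if s ∈ A 0 then 1 else 0 := by
  simp [cylProb, Measure.dirac_apply' _ (hA 0), Set.indicator_apply]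

lemma cylProb_dirac_succ (n : ℕ) (A : ℕ → Set S) (hA : ∀ i, MeasurableSet (A i)) (s : S) :
    cylProb κ (n + 1) (Measure.dirac s) A =
      if s ∈ A 0 then cylProb κ n (κ s) (fun i => A (i + 1)) else 0 := by
  classical
  show (∫⁻ t in A 0, cylProb κ n (κ t) (fun i => A (i + 1)) ∂Measure.dirac s) = _
  rw [setLIntegral_dirac' (measurable_cylProb_kernel κ n _ (fun i => hA (i + 1))) (hA 0)]

lemma measurable_cylProb_dirac (n : ℕ) (A : ℕ → Set S) (hA : ∀ i, MeasurableSet (A i)) :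
    Measurable (fun s => cylProb κ n (Measure.dirac s) A) := by
  cases n with
  | zero =>
    have : (fun s => cylProb κ 0 (Measure.dirac s) A)
        = (A 0).indicator (fun _ => (1 : ℝ≥0∞)) := by
      funext s; rw [cylProb_dirac_zero κ A hA, Set.indicator_apply]
    rw [this]; exact measurable_const.indicator (hA 0)
  | succ n =>
    have : (fun s => cylProb κ (n + 1) (Measure.dirac s) A)
        = (A 0).indicator (fun s => cylProb κ n (κ s) (fun i => A (i + 1))) := by
      funext s; rw [cylProb_dirac_succ κ n A hA, Set.indicator_apply]
    rw [this]
    exact (measurable_cylProb_kernel κ n _ (fun i => hA (i + 1))).indicator (hA 0)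

lemma cylProb_eq_lintegral_dirac (n : ℕ) (μ : Measure S) (A : ℕ → Set S)
    (hA : ∀ i, MeasurableSet (A i)) :
    cylProb κ n μ A = ∫⁻ s, cylProb κ n (Measure.dirac s) A ∂μ := by
  cases n with
  | zero =>
    have : (fun s => cylProb κ 0 (Measure.dirac s) A)
        = (A 0).indicator (fun _ => (1 : ℝ≥0∞)) := by
      funext s; rw [cylProb_dirac_zero κ A hA, Set.indicator_apply]
    rw [this]
    simp only [lintegral_indicator (hA 0)]
    rw [setLIntegral_one]
    rfl
  | succ n =>
    have : (fun s => cylProb κ (n + 1) (Measure.dirac s) A)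
        = (A 0).indicator (fun s => cylProb κ n (κ s) (fun i => A (i + 1))) := by
      funext s; rw [cylProb_dirac_succ κ n A hA, Set.indicator_apply]
    rw [this, lintegral_indicator (hA 0)]
    rfl

lemma cylProb_bind (n : ℕ) (μ : Measure S) (A : ℕ → Set S) (hA : ∀ i, MeasurableSet (A i)) :
    cylProb κ n (μ.bind (fun s => κ s)) A = ∫⁻ s, cylProb κ n (κ s) A ∂μ := by
  rw [cylProb_eq_lintegral_dirac κ n _ A hA,
    Measure.lintegral_bind κ.measurable.aemeasurable (measurable_cylProb_dirac κ n A hA).aemeasurable]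
  congr 1; funext s
  exact (cylProb_eq_lintegral_dirac κ n (κ s) A hA).symm

instance probOmega (μ : Measure S) [IsProbabilityMeasure μ] : IsProbabilityMeasure (Omega κ μ) := by
  constructor
  rw [Omega, Measure.bind_apply MeasurableSet.univ κ.measurable.aemeasurable]
  simp [measure_univ]

lemma isProb_iter_Omega (μ : Measure S) [IsProbabilityMeasure μ] (k : ℕ) :
    IsProbabilityMeasure ((Omega κ)^[k] μ) := by
  induction k with
  | zero => simpa
  | succ k ih =>
    rw [Function.iterate_succ_apply']
    haveI := ih; exact probOmega κ _

lemma cylProb_succ_univ (n : ℕ) (μ : Measure S) (A : ℕ → Set S)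
    (hA : ∀ i, MeasurableSet (A i)) (h0 : A 0 = Set.univ) :
    cylProb κ (n + 1) μ A = cylProb κ n (Omega κ μ) (fun i => A (i + 1)) := by
  show (∫⁻ s in A 0, cylProb κ n (κ s) (fun i => A (i + 1)) ∂μ) = _
  rw [h0, Measure.restrict_univ, Omega,
    cylProb_bind κ n μ _ (fun i => hA (i + 1))]

lemma cylProb_univ_prefix (k : ℕ) (n : ℕ) (μ : Measure S) (A : ℕ → Set S)
    (hA : ∀ i, MeasurableSet (A i)) (hUniv : ∀ i < k, A i = Set.univ) :
    cylProb κ (k + n) μ A = cylProb κ n ((Omega κ)^[k] μ) (fun i => A (i + k)) := by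
  induction k generalizing μ A with
  | zero => simp
  | succ k ih =>
    have h1 : k + 1 + n = (k + n) + 1 := by omega
    rw [h1, cylProb_succ_univ κ (k + n) μ A hA (hUniv 0 (Nat.succ_pos k)),
      ih (Omega κ μ) (fun i => A (i + 1)) (fun i => hA (i + 1))
        (fun i hi => hUniv (i + 1) (by omega)),
      Function.iterate_succ_apply]
    rfl


section path
variable (P : Measure S → Measure (ℕ → S))

variable (hP : IsPathMeasure κ P)

lemma measurableSet_evF {B : Set S} (hB : MeasurableSet B) : MeasurableSet (evF B) := by
  have : evF B = ⋃ k, (fun ρ : ℕ → S => ρ k) ⁻¹' B := by ext ρ; simp [evF]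
  rw [this]; exact MeasurableSet.iUnion fun k => measurable_pi_apply k hB

lemma measurableSet_evFle {B : Set S} (hB : MeasurableSet B) (n : ℕ) :
    MeasurableSet (evFle n B) := by
  have : evFle n B = ⋃ k, ⋃ (_ : k ≤ n), (fun ρ : ℕ → S => ρ k) ⁻¹' B := by
    ext ρ; simp [evFle]
  rw [this]
  exact MeasurableSet.iUnion fun k => MeasurableSet.iUnion fun _ => measurable_pi_apply k hB

lemma compl_evFle (n : ℕ) (B : Set S) : (evFle n B)ᶜ = {ρ | ∀ i ≤ n, ρ i ∈ Bᶜ} := by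
  ext ρ; simp [evFle]

lemma measurableSet_evFge {B : Set S} (hB : MeasurableSet B) (p : ℕ) :
    MeasurableSet (evFge p B) := by
  have : evFge p B = ⋃ k, ⋃ (_ : p ≤ k), (fun ρ : ℕ → S => ρ k) ⁻¹' B := by
    ext ρ; simp [evFge]
  rw [this]
  exact MeasurableSet.iUnion fun k => MeasurableSet.iUnion fun _ => measurable_pi_apply k hB

lemma measurableSet_evGF {B : Set S} (hB : MeasurableSet B) :
    MeasurableSet (evGF B) := by
  have : evGF B = ⋂ n, ⋃ k, ⋃ (_ : n ≤ k), (fun ρ : ℕ → S => ρ k) ⁻¹' B := by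
    ext ρ; simp [evGF]
  rw [this]
  exact MeasurableSet.iInter fun n =>
    MeasurableSet.iUnion fun k => MeasurableSet.iUnion fun _ => measurable_pi_apply k hB


lemma measurableSet_cyl (n : ℕ) (A : ℕ → Set S) (hA : ∀ i, MeasurableSet (A i)) :
    MeasurableSet {ρ : ℕ → S | ∀ i ≤ n, ρ i ∈ A i} := by
  have : {ρ : ℕ → S | ∀ i ≤ n, ρ i ∈ A i}
      = ⋂ i, ⋂ (_ : i ≤ n), (fun ρ : ℕ → S => ρ i) ⁻¹' (A i) := by
    ext ρ; simp
  rw [this]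
  exact MeasurableSet.iInter fun i => MeasurableSet.iInter fun _ => measurable_pi_apply i (hA i)

include hP

lemma P_evF_eq_zero_iff {B : Set S} (hB : MeasurableSet B)
    (ν : Measure S) [hν : IsProbabilityMeasure ν] :
    P ν (evF B) = 0 ↔ ∀ n, cylProb κ n ν (fun _ => Bᶜ) = 1 := by
  haveI := (hP ν hν).1
  have hcyl : ∀ n, P ν ((evFle n B)ᶜ) = cylProb κ n ν (fun _ => Bᶜ) := fun n => by
    rw [compl_evFle]
    exact (hP ν hν).2 n _ (fun i => hB.compl)
  have hm : ∀ n, MeasurableSet (evFle n B) := measurableSet_evFle hB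
  have hUn : evF B = ⋃ n, evFle n B := by
    ext ρ
    simp only [evF, evFle, Set.mem_setOf_eq, Set.mem_iUnion]
    exact ⟨fun ⟨k, hk⟩ => ⟨k, k, le_refl k, hk⟩, fun ⟨n, k, _, hk⟩ => ⟨k, hk⟩⟩
  rw [hUn, measure_iUnion_null_iff]
  refine forall_congr' fun n => ?_
  have h1 : cylProb κ n ν (fun _ => Bᶜ) = 1 - P ν (evFle n B) := by
    rw [← hcyl n, prob_compl_eq_one_sub (hm n)]
  constructor
  · intro h; rw [h1, h, tsub_zero]
  · intro h
    have h2 : P ν (evFle n B) = 1 - cylProb κ n ν (fun _ => Bᶜ) := by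
      rw [← hcyl n, ← prob_compl_eq_one_sub (hm n).compl, compl_compl]
    rw [h2, h, tsub_self]

lemma avoid_eq {B : Set S} (hB : MeasurableSet B) :
    avoid P B = ⋂ n, (fun s => cylProb κ n (Measure.dirac s) (fun _ => Bᶜ)) ⁻¹' {1} := by
  ext s
  simp only [avoid, Set.mem_setOf_eq, Set.mem_iInter, Set.mem_preimage, Set.mem_singleton_iff]
  exact P_evF_eq_zero_iff κ P hP hB (Measure.dirac s)

lemma measurableSet_avoid {B : Set S} (hB : MeasurableSet B) :
    MeasurableSet (avoid P B) := by
  rw [avoid_eq κ P hP hB]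
  exact MeasurableSet.iInter fun n =>
    (measurable_cylProb_dirac κ n _ (fun i => hB.compl)) (measurableSet_singleton 1)

lemma avoid_subset_compl {B : Set S} (hB : MeasurableSet B) : avoid P B ⊆ Bᶜ := by
  intro s hs
  rw [avoid_eq κ P hP hB] at hs
  have h0 := Set.mem_iInter.1 hs 0
  simp only [Set.mem_preimage, Set.mem_singleton_iff] at h0
  rw [cylProb_dirac_zero κ _ (fun i => hB.compl) s] at h0
  by_contra hsB
  rw [if_neg hsB] at h0
  exact zero_ne_one h0

lemma cylProb_const_compl_of_avoid {B : Set S} (hB : MeasurableSet B) {s : S}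
    (hs : s ∈ avoid P B) (n : ℕ) :
    cylProb κ n (Measure.dirac s) (fun _ => Bᶜ) = 1 := by
  rw [avoid_eq κ P hP hB] at hs
  have := Set.mem_iInter.1 hs n
  simpa using this

lemma cylProb_avoid_head {B : Set S} (hB : MeasurableSet B)
    (ν : Measure S) (n : ℕ) (A : ℕ → Set S)
    (h0 : A 0 = avoid P B) (hs : ∀ i, 1 ≤ i → A i = Bᶜ) :
    cylProb κ n ν A = ν (avoid P B) := by
  have hCm : MeasurableSet (avoid P B) := measurableSet_avoid κ P hP hB
  have hAm : ∀ i, MeasurableSet (A i) := by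
    intro i
    rcases Nat.eq_zero_or_pos i with h | h
    · rw [h, h0]; exact hCm
    · rw [hs i h]; exact hB.compl
  have hpt : (fun s => cylProb κ n (Measure.dirac s) A)
      = (avoid P B).indicator (fun _ => (1 : ℝ≥0∞)) := by
    funext s
    rw [Set.indicator_apply]
    by_cases hsC : s ∈ avoid P B
    · rw [if_pos hsC]
      have hsB : s ∈ Bᶜ := avoid_subset_compl κ P hP hB hsC
      cases n with
      | zero => rw [cylProb_dirac_zero κ A hAm s, if_pos (h0 ▸ hsC)]
      | succ n =>
        rw [cylProb_dirac_succ κ n A hAm s, if_pos (h0 ▸ hsC)]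
        have hshift : (fun i => A (i + 1)) = (fun _ => Bᶜ) := by
          funext i; exact hs (i + 1) (by omega)
        rw [hshift]
        have h1 := cylProb_const_compl_of_avoid κ P hP hB hsC (n + 1)
        rw [cylProb_dirac_succ κ n (fun _ => Bᶜ) (fun i => hB.compl) s, if_pos hsB] at h1
        exact h1
    · rw [if_neg hsC]
      cases n with
      | zero => rw [cylProb_dirac_zero κ A hAm s, if_neg (fun h => hsC (h0 ▸ h))]
      | succ n => rw [cylProb_dirac_succ κ n A hAm s, if_neg (fun h => hsC (h0 ▸ h))]
  rw [cylProb_eq_lintegral_dirac κ n ν A hAm, hpt]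
  simp only [lintegral_indicator hCm]
  rw [setLIntegral_one]

/-- The no-return lemma: a.s. no path visits `avoid P B` and later visits `B`. -/
lemma noReturn {B : Set S} (hB : MeasurableSet B)
    (μ : Measure S) [hμ : IsProbabilityMeasure μ] :
    P μ {ρ | ∃ k, ρ k ∈ avoid P B ∧ ∃ m, k ≤ m ∧ ρ m ∈ B} = 0 := by
  haveI := (hP μ hμ).1
  set C := avoid P B with hC
  have hCm : MeasurableSet C := measurableSet_avoid κ P hP hB
  have hCB : C ⊆ Bᶜ := avoid_subset_compl κ P hP hB
  set A : ℕ → ℕ → Set S := fun k i => if i < k then Set.univ else if i = k then C else Bᶜ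
    with hAdef
  have hAm : ∀ k i, MeasurableSet (A k i) := by
    intro k i
    simp only [hAdef]
    split_ifs
    · exact MeasurableSet.univ
    · exact hCm
    · exact hB.compl
  have hkey : ∀ k m, k ≤ m → P μ {ρ | ∀ i ≤ m, ρ i ∈ A k i} = ((Omega κ)^[k] μ) C := by
    intro k m hkm
    obtain ⟨n, rfl⟩ : ∃ n, m = k + n := ⟨m - k, by omega⟩
    rw [(hP μ hμ).2 (k + n) (A k) (hAm k),
      cylProb_univ_prefix κ k n μ (A k) (hAm k)
        (fun i hi => by simp only [hAdef]; rw [if_pos hi])]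
    haveI := isProb_iter_Omega κ μ k
    refine cylProb_avoid_head κ P hP hB _ n _ ?_ ?_
    · simp only [hAdef]
      rw [if_neg (by omega), if_pos (by omega)]
    · intro i hi
      simp only [hAdef]
      rw [if_neg (by omega), if_neg (by omega)]
  have hdiff : ∀ k n, P μ ({ρ | ∀ i ≤ k, ρ i ∈ A k i} \ {ρ | ∀ i ≤ k + n, ρ i ∈ A k i}) = 0 := by
    intro k n
    have hsub : {ρ : ℕ → S | ∀ i ≤ k + n, ρ i ∈ A k i} ⊆ {ρ | ∀ i ≤ k, ρ i ∈ A k i} :=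
      fun ρ h i hi => h i (le_trans hi (Nat.le_add_right k n))
    rw [measure_diff hsub (measurableSet_cyl (k + n) (A k) (hAm k)).nullMeasurableSet
      (measure_ne_top _ _), hkey k (k + n) (Nat.le_add_right k n), hkey k k (le_refl k),
      tsub_self]
  refine measure_mono_null ?_
    (measure_iUnion_null fun k => measure_iUnion_null fun n => hdiff k n)
  rintro ρ ⟨k, hkC, m, hkm, hmB⟩
  have hmk : m ≠ k := by
    intro h
    exact (hCB hkC) (h ▸ hmB)
  refine Set.mem_iUnion.2 ⟨k, Set.mem_iUnion.2 ⟨m - k, ?_, ?_⟩⟩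
  · intro i hi
    simp only [hAdef]
    split_ifs with h1 h2
    · exact Set.mem_univ _
    · rw [h2]; exact hkC
    · omega
  · intro hY
    have hm := hY m (by omega)
    simp only [hAdef] at hm
    rw [if_neg (by omega), if_neg hmk] at hm
    exact hm hmB


end path
end aux

/-- qualitative analysis of (repeated) reachability under decisiveness:
(i) under `D(μ,B)`: `Prob_μ(F B) = 1 ↔ Prob_μ((S∖B) U B̃) = 0`;
(ii) under `SD(μ,B)`: `Prob_μ(GF B) = 1 ↔ Prob_μ(F B̃) = 0`;
(iii) under `D(μ,B̃)` and `PD(μ,B)`: `Prob_μ(GF B) > 0 ↔ Prob_μ(F B̃̃) > 0`. -/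
theorem statement_17 {S : Type*} [MeasurableSpace S]
    (κ : Kernel S S) [IsMarkovKernel κ]
    (P : Measure S → Measure (ℕ → S)) (hP : IsPathMeasure κ P)
    (μ : Measure S) (hμ : IsProbabilityMeasure μ)
    (B : Set S) (hB : MeasurableSet B) :
    (Decisive P μ B →
      (P μ (evF B) = 1 ↔ P μ (evU Bᶜ (avoid P B)) = 0)) ∧
    (StronglyDecisive P μ B →
      (P μ (evGF B) = 1 ↔ P μ (evF (avoid P B)) = 0)) ∧
    (Decisive P μ (avoid P B) → PersistentlyDecisive P μ B →
      (0 < P μ (evGF B) ↔ 0 < P μ (evF (avoid P (avoid P B))))) := by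
  haveI hPμ : IsProbabilityMeasure (P μ) := (hP μ hμ).1
  have hBt : MeasurableSet (avoid P B) := measurableSet_avoid κ P hP hB
  have hBtt : MeasurableSet (avoid P (avoid P B)) := measurableSet_avoid κ P hP hBt
  have hFB : MeasurableSet (evF B) := measurableSet_evF hB
  have hFBt : MeasurableSet (evF (avoid P B)) := measurableSet_evF hBt
  have hFBtt : MeasurableSet (evF (avoid P (avoid P B))) := measurableSet_evF hBtt
  have hGF : MeasurableSet (evGF B) := measurableSet_evGF hB
  have hN1 : P μ {ρ | ∃ k, ρ k ∈ avoid P B ∧ ∃ m, k ≤ m ∧ ρ m ∈ B} = 0 :=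
    noReturn κ P hP hB μ
  have hN2 : P μ {ρ | ∃ k, ρ k ∈ avoid P (avoid P B) ∧ ∃ m, k ≤ m ∧ ρ m ∈ avoid P B} = 0 :=
    noReturn κ P hP hBt μ
  refine ⟨?_, ?_, ?_⟩
  · intro hD
    constructor
    · intro hA1
      refine measure_mono_null ?_ (measure_union_null hN1
        (by rw [prob_compl_eq_one_sub hFB, hA1, tsub_self]))
      rintro ρ ⟨k, hkBt, hj⟩
      by_cases hρ : ρ ∈ evF B
      · obtain ⟨m, hm⟩ := hρ
        have hkm : k ≤ m := by
          by_contra h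
          exact (hj m (by omega)) hm
        exact Or.inl ⟨k, hkBt, m, hkm, hm⟩
      · exact Or.inr hρ
    · intro hU
      have h1 : evF B ∪ evF (avoid P B) ⊆ evF B ∪ evU Bᶜ (avoid P B) := by
        rintro ρ (h | h)
        · exact Or.inl h
        · by_cases hρ : ρ ∈ evF B
          · exact Or.inl hρ
          · obtain ⟨k, hk⟩ := h
            exact Or.inr ⟨k, hk, fun j _ hjB => hρ ⟨j, hjB⟩⟩
      have h2 : (1 : ℝ≥0∞) ≤ P μ (evF B) := by
        calc (1 : ℝ≥0∞) = P μ (evF B ∪ evF (avoid P B)) := hD.symm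
        _ ≤ P μ (evF B ∪ evU Bᶜ (avoid P B)) := measure_mono h1
        _ ≤ P μ (evF B) + P μ (evU Bᶜ (avoid P B)) := measure_union_le _ _
        _ = P μ (evF B) := by rw [hU, add_zero]
      exact le_antisymm prob_le_one h2
  · intro hSD
    constructor
    · intro hG
      refine measure_mono_null ?_ (measure_union_null hN1
        (by rw [prob_compl_eq_one_sub hGF, hG, tsub_self]))
      rintro ρ ⟨k, hk⟩
      by_cases hρ : ρ ∈ evGF B
      · obtain ⟨m, hm, hmB⟩ := hρ k
        exact Or.inl ⟨k, hk, m, hm, hmB⟩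
      · exact Or.inr hρ
    · intro hT
      have h2 : (1 : ℝ≥0∞) ≤ P μ (evGF B) := by
        calc (1 : ℝ≥0∞) = P μ (evGF B ∪ evF (avoid P B)) := hSD.symm
        _ ≤ P μ (evGF B) + P μ (evF (avoid P B)) := measure_union_le _ _
        _ = P μ (evGF B) := by rw [hT, add_zero]
      exact le_antisymm prob_le_one h2
  · intro hD hPD
    have hDm : MeasurableSet (evF (avoid P B) ∪ evF (avoid P (avoid P B))) := hFBt.union hFBtt
    constructor
    · intro hG
      rw [pos_iff_ne_zero]
      intro hTT
      have hzero : P μ (evGF B) = 0 := by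
        refine measure_mono_null ?_ (measure_union_null hN1 (measure_union_null
          (by rw [prob_compl_eq_one_sub hDm, hD, tsub_self]) hTT))
        intro ρ hρ
        by_cases h1 : ρ ∈ evF (avoid P B)
        · obtain ⟨k, hk⟩ := h1
          obtain ⟨m, hm, hmB⟩ := hρ k
          exact Or.inl ⟨k, hk, m, hm, hmB⟩
        · by_cases h2 : ρ ∈ evF (avoid P (avoid P B))
          · exact Or.inr (Or.inr h2)
          · exact Or.inr (Or.inl (fun h => h.elim h1 h2))
      rw [hzero] at hG
      exact lt_irrefl 0 hG
    · intro hTT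
      rw [pos_iff_ne_zero]
      intro hG0
      have hE : ∀ p : ℕ, P μ ((evFge p B ∪ evFge p (avoid P B))ᶜ) = 0 := fun p => by
        rw [prob_compl_eq_one_sub ((measurableSet_evFge hB p).union (measurableSet_evFge hBt p)),
          hPD p, tsub_self]
      have hzero : P μ (evF (avoid P (avoid P B))) = 0 := by
        refine measure_mono_null ?_ (measure_union_null hN2
          (measure_union_null hG0 (measure_iUnion_null hE)))
        rintro ρ ⟨k, hk⟩
        by_cases h1 : ρ ∈ evGF B
        · exact Or.inr (Or.inl h1)
        · simp only [evGF, Set.mem_setOf_eq] at h1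
          push_neg at h1
          obtain ⟨n, hn⟩ := h1
          by_cases h2 : ρ ∈ ⋃ p : ℕ, (evFge p B ∪ evFge p (avoid P B))ᶜ
          · exact Or.inr (Or.inr h2)
          · simp only [Set.mem_iUnion, Set.mem_compl_iff, not_exists, not_not] at h2
            rcases h2 (max k n) with h3 | h3
            · obtain ⟨m, hm, hmB⟩ := h3
              exact absurd hmB (hn m (le_trans (le_max_right k n) hm))
            · obtain ⟨m, hm, hmBt⟩ := h3
              exact Or.inl ⟨k, hk, m, le_trans (le_max_left k n) hm, hmBt⟩
      exact hTT.ne' hzero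


end STS
end
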